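/- arXiv:2502.08196 — 16 statements merged into one kernel-verified Lean document; each statement's English description precedes it below -/
import Mathlib

section
/- A ring R is NJ-symmetric if and only if for all a, b, c in R, abc nilpotent implies acb lies in the Jacobson radical of R. -/
lemma aux_pow {R : Type*} [Ring R] (x y : R) (n : ℕ) :
    (y * x) ^ (n + 1) = y * (x * y) ^ n * x := by
  induction n with
  | zero => simp [mul_assoc]
  | succ n ih => rw [pow_succ, ih, pow_succ]; simp [mul_assoc]

lemma aux_swap {R : Type*} [Ring R] {x y : R} (h : IsNilpotent (x * y)) :
    IsNilpotent (y * x) := by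
  obtain ⟨n, hn⟩ := h
  exact ⟨n + 1, by rw [aux_pow, hn, mul_zero, zero_mul]⟩

/-- A ring `R` is NJ-symmetric if for all `a b c`, `a*b*c` nilpotent implies
`b*a*c` lies in the Jacobson radical. -/
def NJSymmetric (R : Type*) [Ring R] : Prop :=
  ∀ a b c : R, IsNilpotent (a * b * c) → b * a * c ∈ (⊥ : Ideal R).jacobson

theorem stmt_0 (R : Type*) [Ring R] :
    NJSymmetric R ↔
      ∀ a b c : R, IsNilpotent (a * b * c) → a * c * b ∈ (⊥ : Ideal R).jacobson := by
  constructor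
  · intro h a b c habc
    -- c*a*b nilpotent since it's a cyclic permutation of a*b*c
    have h1 : IsNilpotent (c * a * b) := by
      have := aux_swap (x := a * b) (y := c) habc
      rwa [← mul_assoc] at this
    -- NJ with (c, a, b): c*a*b nilpotent ⇒ a*c*b ∈ J
    exact h c a b h1
  · intro h a b c habc
    have h1 : IsNilpotent (b * c * a) :=
      aux_swap (x := a) (y := b * c) (by rwa [mul_assoc] at habc)
    exact h b c a h1
end

section
/- Every left quasi-duo ring is NJ-symmetric. -/
theorem stmt_2 (R : Type*) [Ring R]
    (hqd : ∀ M : Ideal R, M.IsMaximal → ∀ r : R, ∀ m ∈ M, m * r ∈ M) :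
    NJSymmetric R := by
  rintro a b c ⟨n, hn⟩
  rw [Ideal.jacobson, Ideal.mem_sInf]
  rintro M ⟨-, hM⟩
  -- M is completely prime
  have key : ∀ x y : R, x * y ∈ M → x ∈ M ∨ y ∈ M := by
    intro x y hxy
    by_cases hx : x ∈ M
    · exact Or.inl hx
    · right
      have hlt : M < M ⊔ Ideal.span {x} := by
        refine lt_of_le_of_ne le_sup_left fun h => hx ?_
        have : x ∈ M ⊔ Ideal.span {x} :=
          Submodule.mem_sup_right (Ideal.subset_span rfl)
        rwa [← h] at this
      have htop : M ⊔ Ideal.span {x} = ⊤ := hM.1.2 _ hlt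
      have h1 : (1 : R) ∈ M ⊔ Ideal.span {x} := htop ▸ Submodule.mem_top
      obtain ⟨m, hm, z, hz, hmz⟩ := Submodule.mem_sup.mp h1
      obtain ⟨r, hr⟩ := Submodule.mem_span_singleton.mp hz
      rw [smul_eq_mul] at hr
      have : y = m * y + r * (x * y) := by
        rw [← mul_assoc, hr, ← add_mul, hmz, one_mul]
      rw [this]
      exact M.add_mem (hqd M hM y m hm) (M.smul_mem r hxy)
  -- powers in M imply membership
  have pow_mem : ∀ (k : ℕ) (x : R), x ^ k ∈ M → x ∈ M := by
    intro k
    induction k with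
    | zero =>
      intro x hx
      simp only [pow_zero] at hx
      exact absurd (Ideal.eq_top_iff_one M |>.mpr hx) hM.ne_top
    | succ k ih =>
      intro x hx
      rw [pow_succ] at hx
      rcases key _ _ hx with h | h
      · exact ih x h
      · exact h
  have habc : a * b * c ∈ M := pow_mem n _ (hn ▸ M.zero_mem)
  rcases key _ _ habc with h | hc
  · rcases key _ _ h with ha | hb
    · exact hqd M hM c _ (M.smul_mem b ha)
    · exact hqd M hM c _ (hqd M hM a b hb)
  · exact M.smul_mem (b * a) hc
end

section
/- Every abelian J-clean ring is NJ-symmetric. -/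
theorem stmt_3 (R : Type*) [Ring R]
    (habelian : ∀ e : R, IsIdempotentElem e → ∀ r : R, e * r = r * e)
    (hJclean : ∀ a : R, ∃ e j : R, IsIdempotentElem e ∧ j ∈ (⊥ : Ideal R).jacobson ∧
      a = e + j) :
    NJSymmetric R := by
  intro a b c hnil
  set J : Ideal R := (⊥ : Ideal R).jacobson with hJ
  -- J is closed under right multiplication
  have hmr : ∀ x y : R, x ∈ J → x * y ∈ J := fun x y hx =>
    J.mul_mem_right y hx
  have hml : ∀ x y : R, y ∈ J → x * y ∈ J := fun x y hy => J.mul_mem_left x hy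
  -- Step 1: every nilpotent element lies in J
  have hnilJ : ∀ x : R, IsNilpotent x → x ∈ J := by
    rintro x ⟨n, hn⟩
    obtain ⟨e, j, he, hj, hx⟩ := hJclean x
    have hex : e * x = e + e * j := by rw [hx, mul_add, he]
    have key : ∀ k : ℕ, e - e * x ^ k ∈ J := by
      intro k
      induction k with
      | zero => simp
      | succ k ih =>
        have hstep : e - e * x ^ (k + 1) = (e - e * x ^ k) - (e * j) * x ^ k := by
          have : e * x ^ (k + 1) = (e * x) * x ^ k := by rw [pow_succ', mul_assoc]
          rw [this, hex]; noncomm_ring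
        rw [hstep]
        exact J.sub_mem ih (hmr _ _ (hml e j hj))
    have heJ : e ∈ J := by
      have := key n
      rwa [hn, mul_zero, sub_zero] at this
    rw [hx]
    exact J.add_mem heJ hj
  -- Step 2: every commutator lies in J
  have hcommJ : ∀ x y : R, x * y - y * x ∈ J := by
    intro x y
    obtain ⟨e, j, he, hj, hx⟩ := hJclean x
    obtain ⟨f, k, hf, hk, hy⟩ := hJclean y
    have hef : e * f = f * e := habelian e he f
    have hexp : x * y - y * x =
        ((e * k - k * e) + (j * f - f * j)) + (j * k - k * j) := by
      rw [hx, hy]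
      have : (e + j) * (f + k) - (f + k) * (e + j)
          = (e * f - f * e) + (((e * k - k * e) + (j * f - f * j)) + (j * k - k * j)) := by
        noncomm_ring
      rw [this, hef, sub_self, zero_add]
    rw [hexp]
    exact J.add_mem
      (J.add_mem (J.sub_mem (hml e k hk) (hmr k e hk))
        (J.sub_mem (hmr j f hj) (hml f j hj)))
      (J.sub_mem (hml j k hk) (hmr k j hk))
  -- Step 3: conclude
  have h1 : a * b * c ∈ J := hnilJ _ hnil
  have h2 : (a * b - b * a) * c ∈ J := hmr _ c (hcommJ a b)
  have h3 : b * a * c = a * b * c - (a * b - b * a) * c := by noncomm_ring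
  rw [h3]
  exact J.sub_mem h1 h2
end

section
/- If R is a GWS ring in which every nilpotent element x satisfies x^2 = 0, then R is NJ-symmetric. -/
theorem stmt_4 (R : Type*) [Ring R]
    (hGWS : ∀ a b c : R, a * b * c = 0 → IsNilpotent (b * a * c))
    (hidx : ∀ x : R, IsNilpotent x → x ^ 2 = 0) :
    NJSymmetric R := by
  -- nilpotent elements square to zero (as products)
  have hsq0 : ∀ x : R, IsNilpotent x → x * x = 0 := by
    intro x hx
    have := hidx x hx
    rwa [pow_two] at this
  -- a nilpotent square implies nilpotent
  have hsqnil : ∀ x : R, IsNilpotent (x ^ 2) → IsNilpotent x := by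
    rintro x ⟨n, hn⟩
    exact ⟨2 * n, by rw [pow_mul, hn]⟩
  -- swap: x*y nilpotent → y*x nilpotent
  have hswap : ∀ x y : R, IsNilpotent (x * y) → IsNilpotent (y * x) := by
    rintro x y ⟨n, hn⟩
    refine ⟨n + 1, ?_⟩
    have key : ∀ m : ℕ, (y * x) ^ (m + 1) = y * (x * y) ^ m * x := by
      intro m
      induction m with
      | zero => simp
      | succ m ih =>
        rw [pow_succ, ih, pow_succ]
        simp only [mul_assoc]
    rw [key, hn, mul_zero, zero_mul]
  -- nilpotents absorb right multiplication
  have hmulr : ∀ x y : R, IsNilpotent x → IsNilpotent (x * y) := by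
    intro x y hx
    have hxx := hsq0 x hx
    have h0 : y * x * (x * y) = 0 := by
      rw [mul_assoc, ← mul_assoc x x y, hxx, zero_mul, mul_zero]
    have h1 := hGWS y x (x * y) h0
    apply hsqnil
    have e : (x * y) ^ 2 = x * y * (x * y) := by rw [pow_two]
    rwa [e]
  -- nilpotents absorb left multiplication
  have hmull : ∀ x y : R, IsNilpotent x → IsNilpotent (y * x) := by
    intro x y hx
    exact hswap x y (hmulr x y hx)
  -- semicommutativity modulo nilpotents
  have hsemi : ∀ x y r : R, IsNilpotent (x * y) → IsNilpotent (x * r * y) := by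
    intro x y r h
    have hyx := hswap x y h
    have hmid : IsNilpotent (x * r * (y * x) * (r * y)) :=
      hmulr _ (r * y) (hmull (y * x) (x * r) hyx)
    apply hsqnil
    have e : (x * r * y) ^ 2 = x * r * (y * x) * (r * y) := by
      rw [pow_two]; simp only [mul_assoc]
    rwa [e]
  intro a b c habc
  -- b*a*c is nilpotent
  have h1 : IsNilpotent (a * (b * c)) := by rwa [← mul_assoc]
  have h2 : IsNilpotent (a * c * (b * c)) := hsemi a (b * c) c h1
  have h3 : IsNilpotent (a * c * b * c) := by rwa [← mul_assoc] at h2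
  have h4 : IsNilpotent (a * c * b * a * c) := hsemi (a * c * b) c a h3
  have hbac : IsNilpotent (b * a * c) := by
    apply hsqnil
    have e : (b * a * c) ^ 2 = b * (a * c * b * a * c) := by
      rw [pow_two]; simp only [mul_assoc]
    rw [e]
    exact hmull _ b h4
  -- conclude membership in the Jacobson radical
  rw [Ideal.mem_jacobson_iff]
  intro y
  refine ⟨1 - y * (b * a * c), ?_⟩
  rw [Ideal.mem_bot]
  have hw : y * (b * a * c) * (y * (b * a * c)) = 0 :=
    hsq0 _ (hmull (b * a * c) y hbac)
  rw [mul_assoc, sub_mul, one_mul, hw, sub_zero]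
  abel
end

section
/- For any ring R and any integer n ≥ 2, the matrix ring M_n(R) is not NJ-symmetric. Specifically, with a = e_{11} + e_{21}, b = e_{22}, c = e_{12} + e_{22}, one has abc = 0 but bac = e_{22} is not in J(M_n(R)). -/
open Matrix in
theorem stmt_5 (R : Type*) [Ring R] [Nontrivial R] (n : ℕ) (hn : 2 ≤ n) :
    ¬ NJSymmetric (Matrix (Fin n) (Fin n) R) ∧
    (Matrix.single (⟨0, by omega⟩ : Fin n) (⟨0, by omega⟩ : Fin n) (1 : R) +
        Matrix.single (⟨1, by omega⟩ : Fin n) (⟨0, by omega⟩ : Fin n) (1 : R)) *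
      Matrix.single (⟨1, by omega⟩ : Fin n) (⟨1, by omega⟩ : Fin n) (1 : R) *
      (Matrix.single (⟨0, by omega⟩ : Fin n) (⟨1, by omega⟩ : Fin n) (1 : R) +
        Matrix.single (⟨1, by omega⟩ : Fin n) (⟨1, by omega⟩ : Fin n) (1 : R)) = 0 ∧
    Matrix.single (⟨1, by omega⟩ : Fin n) (⟨1, by omega⟩ : Fin n) (1 : R) *
      (Matrix.single (⟨0, by omega⟩ : Fin n) (⟨0, by omega⟩ : Fin n) (1 : R) +
        Matrix.single (⟨1, by omega⟩ : Fin n) (⟨0, by omega⟩ : Fin n) (1 : R)) *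
      (Matrix.single (⟨0, by omega⟩ : Fin n) (⟨1, by omega⟩ : Fin n) (1 : R) +
        Matrix.single (⟨1, by omega⟩ : Fin n) (⟨1, by omega⟩ : Fin n) (1 : R)) =
      Matrix.single (⟨1, by omega⟩ : Fin n) (⟨1, by omega⟩ : Fin n) (1 : R) ∧
    Matrix.single (⟨1, by omega⟩ : Fin n) (⟨1, by omega⟩ : Fin n) (1 : R) ∉
      (⊥ : Ideal (Matrix (Fin n) (Fin n) R)).jacobson := by

  set i0 : Fin n := ⟨0, by omega⟩ with hi0
  set i1 : Fin n := ⟨1, by omega⟩ with hi1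
  have hne : i0 ≠ i1 := by simp [hi0, hi1, Fin.ext_iff]
  have habc : (Matrix.single i0 i0 (1 : R) + Matrix.single i1 i0 (1 : R)) *
      Matrix.single i1 i1 (1 : R) *
      (Matrix.single i0 i1 (1 : R) + Matrix.single i1 i1 (1 : R)) = 0 := by
    simp [add_mul, mul_add, hne, hne.symm]
  have hbac : Matrix.single i1 i1 (1 : R) *
      (Matrix.single i0 i0 (1 : R) + Matrix.single i1 i0 (1 : R)) *
      (Matrix.single i0 i1 (1 : R) + Matrix.single i1 i1 (1 : R)) =
      Matrix.single i1 i1 (1 : R) := by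
    simp [add_mul, mul_add, hne, hne.symm]
  have hnj : Matrix.single i1 i1 (1 : R) ∉
      (⊥ : Ideal (Matrix (Fin n) (Fin n) R)).jacobson := by
    intro h
    obtain ⟨z, hz⟩ := Ideal.mem_jacobson_iff.1 h (-1)
    rw [Ideal.mem_bot, sub_eq_zero] at hz
    have := congrArg (fun M : Matrix (Fin n) (Fin n) R => M i1 i1) hz
    beta_reduce at this
    rw [Matrix.add_apply, Matrix.one_apply_eq] at this
    have h2 : (z * -1 * Matrix.single i1 i1 (1 : R)) i1 i1 = -(z i1 i1) := by
      rw [Matrix.mul_single_apply_same]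
      simp
    rw [h2] at this
    simp at this
  refine ⟨?_, habc, hbac, hnj⟩
  intro H
  exact hnj (hbac ▸ H _ _ _ (habc ▸ IsNilpotent.zero))
end

section
/- Let R be an NJ-symmetric ring and M a maximal left ideal of R which equals the left annihilator of some nonzero idempotent e. Then M is a two-sided ideal of R. -/
theorem stmt_6 (R : Type*) [Ring R] (hR : NJSymmetric R)
    (M : Ideal R) (hM : M.IsMaximal) (e : R) (he : IsIdempotentElem e) (he0 : e ≠ 0)
    (hMl : ∀ r : R, r ∈ M ↔ r * e = 0) :
    ∀ r : R, ∀ m ∈ M, m * r ∈ M := by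
  intro r m hm
  have hme : m * e = 0 := (hMl m).mp hm
  have hnil : IsNilpotent (r * m * e) := by
    rw [mul_assoc, hme, mul_zero]; exact IsNilpotent.zero
  have hJ : m * r * e ∈ (⊥ : Ideal R).jacobson := hR r m e hnil
  have hMmem : m * r * e ∈ M := by
    rw [Ideal.jacobson] at hJ
    exact Ideal.mem_sInf.mp hJ ⟨bot_le, hM⟩
  have h0 : m * r * e = 0 := by
    have := (hMl (m * r * e)).mp hMmem
    rwa [mul_assoc (m * r) e e, he] at this
  exact (hMl (m * r)).mpr h0
end

section
/- Every weak symmetric ring is NJ-symmetric. -/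
private lemma pow_rot {R : Type*} [Ring R] (a b : R) (n : ℕ) :
    (b * a) ^ (n + 1) = b * (a * b) ^ n * a := by
  induction n with
  | zero => simp [mul_assoc]
  | succ n ih =>
    rw [pow_succ, ih, pow_succ]
    simp only [mul_assoc]

private lemma nilp_rot {R : Type*} [Ring R] {a b : R} (h : IsNilpotent (a * b)) :
    IsNilpotent (b * a) := by
  obtain ⟨n, hn⟩ := h
  exact ⟨n + 1, by rw [pow_rot, hn, mul_zero, zero_mul]⟩

section

variable {R : Type*} [Ring R]
  (hws : ∀ a b c : R, IsNilpotent (a * b * c) → IsNilpotent (a * c * b))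

include hws

/-- Swap two adjacent blocks in a nilpotent word. -/
private lemma swap_blocks (p u v q : R) (h : IsNilpotent (p * u * (v * q))) :
    IsNilpotent (p * v * (u * q)) := by
  have h1 : IsNilpotent (q * p * u * v) := by
    have := nilp_rot (a := p * u * v) (b := q) (by simpa [mul_assoc] using h)
    simpa [mul_assoc] using this
  have h3 : IsNilpotent (q * p * v * u) := hws (q * p) u v h1
  have h4 := nilp_rot (a := q) (b := p * v * u) (by simpa [mul_assoc] using h3)
  simpa [mul_assoc] using h4

/-- In a weak symmetric ring, left multiples of nilpotents are nilpotent. -/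
private lemma nilp_mul_left {x : R} (hx : IsNilpotent x) (r : R) :
    IsNilpotent (r * x) := by
  obtain ⟨n, hn⟩ := hx
  have hn' : x ^ (n + 1) = 0 := by rw [pow_succ, hn, zero_mul]
  set m := n + 1 with hm
  have key : ∀ k, k ≤ m → IsNilpotent (r ^ (m - k) * x ^ (m - k) * (r * x) ^ k) := by
    intro k
    induction k with
    | zero =>
      intro _
      exact ⟨1, by simp [hn']⟩
    | succ k ih =>
      intro hk
      have ihk := ih (Nat.le_of_succ_le hk)
      have hj : m - k = (m - (k + 1)) + 1 := by omega
      set j := m - (k + 1) with hjdef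
      have h1 : IsNilpotent (r ^ j * r * (x ^ j * (x * (r * x) ^ k))) := by
        have heq : r ^ (m - k) * x ^ (m - k) * (r * x) ^ k
            = r ^ j * r * (x ^ j * (x * (r * x) ^ k)) := by
          rw [hj, pow_succ, pow_succ]
          simp only [mul_assoc]
        rw [heq] at ihk
        exact ihk
      have h2 := swap_blocks hws (r ^ j) r (x ^ j) (x * (r * x) ^ k) h1
      have heq2 : r ^ j * x ^ j * (r * (x * (r * x) ^ k))
          = r ^ j * x ^ j * (r * x) ^ (k + 1) := by
        rw [pow_succ']
        simp only [mul_assoc]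
      rw [heq2] at h2
      exact h2
  have := key m le_rfl
  simp only [Nat.sub_self, pow_zero, one_mul] at this
  obtain ⟨t, ht⟩ := this
  exact ⟨m * t, by rw [pow_mul, ht]⟩

end

theorem stmt_7 (R : Type*) [Ring R]
    (hws : ∀ a b c : R, IsNilpotent (a * b * c) → IsNilpotent (a * c * b)) :
    NJSymmetric R := by
  intro a b c habc
  have hbca : IsNilpotent (b * c * a) := by
    have := nilp_rot (a := a) (b := b * c) (by simpa [mul_assoc] using habc)
    simpa [mul_assoc] using this
  have hbac : IsNilpotent (b * a * c) := hws b c a hbca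
  rw [Ideal.mem_jacobson_iff]
  intro y
  have hu : IsNilpotent (y * (b * a * c)) := nilp_mul_left hws hbac y
  have hunit : IsUnit (1 - (-(y * (b * a * c)))) := hu.neg.isUnit_one_sub
  rw [sub_neg_eq_add] at hunit
  obtain ⟨z, hz⟩ := hunit
  refine ⟨↑z⁻¹, ?_⟩
  have hinv : (↑z⁻¹ : R) * (1 + y * (b * a * c)) = 1 := by
    rw [← hz]; exact z.inv_mul
  have : (↑z⁻¹ : R) * y * (b * a * c) + ↑z⁻¹ - 1 = 0 := by
    have := hinv
    rw [mul_add, mul_one] at this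
    rw [mul_assoc]
    linear_combination (norm := noncomm_ring) this
  rw [this]
  exact Submodule.zero_mem ⊥
end

section
/- Every semicommutative ring is NJ-symmetric. -/
section Aux

variable {R : Type*} [Ring R]

/-- Insertion lemma: in a semicommutative ring, if `u * x^(n+1) = 0` then
`u * (r*x)^(n+1) = 0`. -/
lemma sc_insert (hsc : ∀ a b : R, a * b = 0 → ∀ r : R, a * r * b = 0) :
    ∀ n : ℕ, ∀ u x r : R, u * x ^ (n + 1) = 0 → u * (r * x) ^ (n + 1) = 0 := by
  intro n
  induction n with
  | zero =>
    intro u x r h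
    simpa [mul_assoc] using hsc u x (by simpa using h) r
  | succ n ih =>
    intro u x r h
    have h1 : u * r * x ^ (n + 2) = 0 := hsc u (x ^ (n + 2)) h r
    have h2 : (u * r * x) * x ^ (n + 1) = 0 := by
      rw [mul_assoc, ← pow_succ']; exact h1
    have h3 := ih (u * r * x) x r h2
    calc u * (r * x) ^ (n + 2) = (u * r * x) * (r * x) ^ (n + 1) := by
          rw [pow_succ', ← mul_assoc, ← mul_assoc]
      _ = 0 := h3

lemma sc_nil_mul_left (hsc : ∀ a b : R, a * b = 0 → ∀ r : R, a * r * b = 0)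
    {x : R} (hx : IsNilpotent x) (r : R) : IsNilpotent (r * x) := by
  obtain ⟨n, hn⟩ := hx
  cases n with
  | zero =>
    have h1 : (1 : R) = 0 := by simpa using hn
    refine ⟨1, ?_⟩
    calc (r * x) ^ 1 = (r * x) * 1 := by rw [pow_one, mul_one]
      _ = 0 := by rw [h1, mul_zero]
  | succ n =>
    exact ⟨n + 1, by simpa using sc_insert hsc n 1 x r (by simpa using hn)⟩

lemma pow_swap (x y : R) : ∀ n : ℕ, (y * x) ^ (n + 1) = y * (x * y) ^ n * x
  | 0 => by simp [mul_assoc]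
  | n + 1 => by rw [pow_succ', pow_swap x y n, pow_succ']; noncomm_ring

lemma nil_swap {x y : R} (h : IsNilpotent (x * y)) : IsNilpotent (y * x) := by
  obtain ⟨n, hn⟩ := h
  exact ⟨n + 1, by rw [pow_swap, hn, mul_zero, zero_mul]⟩

lemma sc_nil_mul_right (hsc : ∀ a b : R, a * b = 0 → ∀ r : R, a * r * b = 0)
    {x : R} (hx : IsNilpotent x) (r : R) : IsNilpotent (x * r) :=
  nil_swap (sc_nil_mul_left hsc hx r)

lemma nil_of_sq {x : R} (h : IsNilpotent (x * x)) : IsNilpotent x := by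
  obtain ⟨n, hn⟩ := h
  exact ⟨2 * n, by rw [pow_mul, sq, hn]⟩

/-- `x*y` nilpotent implies `x*r*y` nilpotent in a semicommutative ring. -/
lemma sc_nil_insert (hsc : ∀ a b : R, a * b = 0 → ∀ r : R, a * r * b = 0)
    {x y : R} (h : IsNilpotent (x * y)) (r : R) : IsNilpotent (x * r * y) := by
  have hyx : IsNilpotent (y * x) := nil_swap h
  have h1 : IsNilpotent ((x * r) * ((y * x) * (r * y))) := by
    apply sc_nil_mul_left hsc
    exact sc_nil_mul_right hsc hyx (r * y)
  have h2 : (x * r) * ((y * x) * (r * y)) = (x * r * y) * (x * r * y) := by noncomm_ring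
  rw [h2] at h1
  exact nil_of_sq h1

end Aux

theorem stmt_9 (R : Type*) [Ring R]
    (hsc : ∀ a b : R, a * b = 0 → ∀ r : R, a * r * b = 0) :
    NJSymmetric R := by
  intro a b c habc
  -- Step 1 : a * r * b * s * c is nilpotent for all r s.
  have hpat : ∀ r s : R, IsNilpotent (a * r * b * s * c) := by
    intro r s
    have h1 : IsNilpotent (a * (b * c)) := by rwa [← mul_assoc]
    have h2 : IsNilpotent (a * r * (b * c)) := sc_nil_insert hsc h1 r
    have h3 : IsNilpotent ((a * r * b) * c) := by rwa [← mul_assoc] at h2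
    exact sc_nil_insert hsc h3 s
  -- Step 2 : b * a * c is nilpotent.
  have hbac : IsNilpotent (b * a * c) := by
    have h4 : IsNilpotent (a * c * b * a * c) := hpat c a
    have h5 : IsNilpotent (b * (a * c * b * a * c)) := sc_nil_mul_left hsc h4 b
    have h6 : b * (a * c * b * a * c) = (b * a * c) * (b * a * c) := by noncomm_ring
    rw [h6] at h5
    exact nil_of_sq h5
  -- Step 3 : an element all of whose left multiples are nilpotent lies in J(R).
  rw [Ideal.jacobson, Ideal.mem_sInf]
  rintro M ⟨-, hM⟩
  by_contra hxM
  have hlt : M < M ⊔ Ideal.span {b * a * c} := by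
    refine lt_of_le_of_ne le_sup_left ?_
    intro heq
    apply hxM
    rw [heq]
    exact Submodule.mem_sup_right (Ideal.subset_span rfl)
  have htop : M ⊔ Ideal.span {b * a * c} = ⊤ := hM.1.2 _ hlt
  have h1mem : (1 : R) ∈ M ⊔ Ideal.span {b * a * c} := htop ▸ Submodule.mem_top
  obtain ⟨m, hm, z, hz, hmz⟩ := Submodule.mem_sup.mp h1mem
  obtain ⟨r, hr⟩ := Submodule.mem_span_singleton.mp hz
  have hmu : IsUnit m := by
    have : m = 1 - r * (b * a * c) := by
      rw [← hmz, ← hr]; simp [smul_eq_mul]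
    rw [this]
    exact (sc_nil_mul_left hsc hbac r).isUnit_one_sub
  exact hM.ne_top (Ideal.eq_top_of_isUnit_mem M hm hmu)
end

section
/- If the quotient ring R/J(R) is NJ-symmetric, then R is NJ-symmetric. -/
theorem stmt_10 (R S : Type*) [Ring R] [Ring S] (f : R →+* S)
    (hf : Function.Surjective f) (hker : RingHom.ker f = (⊥ : Ideal R).jacobson)
    (hS : NJSymmetric S) :
    NJSymmetric R := by
  intro a b c h
  have hn : IsNilpotent (f a * f b * f c) := by
    simpa [map_mul] using h.map f
  have hmem := hS (f a) (f b) (f c) hn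
  have : b * a * c ∈ Ideal.comap f ((⊥ : Ideal S).jacobson) := by
    simpa [Ideal.mem_comap, map_mul] using hmem
  rwa [Ideal.comap_jacobson_of_surjective hf, ← RingHom.ker_eq_comap_bot, hker,
    Ideal.jacobson_idem] at this
end

section
/- If R is an NJ-symmetric left SF ring, then R/J(R) is reduced, i.e., has no nonzero nilpotent elements. -/
/-- A ring `R` is left SF if every simple left `R`-module is flat.  Every simple
left module is of the form `R/H` for a maximal left ideal `H`, and `R/H` is flat
iff for every `a ∈ H` there is `b ∈ H` with `a = a * b` (the standard
element-wise characterization of flatness of cyclic modules, which is the cited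
Lemma 3.14); Mathlib has no flatness over noncommutative rings, so we use this
characterization as the definition. -/
def LeftSF (R : Type*) [Ring R] : Prop :=
  ∀ H : Ideal R, H.IsMaximal → ∀ a ∈ H, ∃ b ∈ H, a = a * b

/-- Key step: in an NJ-symmetric left SF ring, `a² ∈ J(R)` implies `a ∈ J(R)`. -/
lemma sq_mem_jacobson_imp {R : Type*} [Ring R] (hR : NJSymmetric R) (hSF : LeftSF R)
    (a : R) (ha : a * a ∈ (⊥ : Ideal R).jacobson) : a ∈ (⊥ : Ideal R).jacobson := by
  set J : Ideal R := (⊥ : Ideal R).jacobson with hJ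
  -- L = {r | r * a ∈ J}, a left ideal containing a
  set L : Ideal R := Submodule.comap (LinearMap.toSpanSingleton R R a) J with hL
  have haL : a ∈ L := by
    simp only [hL, Submodule.mem_comap, LinearMap.toSpanSingleton_apply, smul_eq_mul]
    exact ha
  by_cases htop : L = ⊤
  · have h1 : (1 : R) ∈ L := htop ▸ Submodule.mem_top
    simp only [hL, Submodule.mem_comap, LinearMap.toSpanSingleton_apply, smul_eq_mul] at h1
    simpa using h1
  · obtain ⟨M, hM, hLM⟩ := Ideal.exists_le_maximal L htop
    obtain ⟨m, hmM, hem⟩ := hSF M hM a (hLM haL)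
    have h0 : IsNilpotent (a * (1 - m) * 1) := by
      refine ⟨1, by simp [mul_sub, ← hem]⟩
    have hnj := hR a (1 - m) 1 h0
    rw [mul_one] at hnj
    have h1m : (1 - m : R) ∈ L := by
      simp only [hL, Submodule.mem_comap, LinearMap.toSpanSingleton_apply, smul_eq_mul]
      exact hnj
    have : (1 : R) ∈ M := by
      have := M.add_mem (hLM h1m) hmM
      simpa using this
    exact absurd (Ideal.eq_top_iff_one M |>.2 this) hM.ne_top

theorem stmt_11 (R : Type*) [Ring R] (hR : NJSymmetric R) (hSF : LeftSF R)
    (S : Type*) [Ring S] (f : R →+* S) (hf : Function.Surjective f)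
    (hker : RingHom.ker f = (⊥ : Ideal R).jacobson) :
    IsReduced S := by
  rw [isReduced_iff_pow_one_lt 2 one_lt_two]
  intro s hs
  obtain ⟨a, rfl⟩ := hf s
  have h2 : a * a ∈ (⊥ : Ideal R).jacobson := by
    rw [← hker, RingHom.mem_ker, map_mul]
    rw [pow_two] at hs
    exact hs
  have := sq_mem_jacobson_imp hR hSF a h2
  rw [← hker, RingHom.mem_ker] at this
  exact this
end

section
/- A ring R is NJ-symmetric if and only if for every idempotent e of R, the corner ring eRe is NJ-symmetric. -/
/-- The NJ-symmetric condition for the corner ring `eRe`, expressed inside `R`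
using the identification `J(eRe) = eJ(R)e`. -/
def CornerNJSymmetric {R : Type*} [Ring R] (e : R) : Prop :=
  ∀ a b c : R, IsNilpotent ((e * a * e) * (e * b * e) * (e * c * e)) →
    ∃ j ∈ (⊥ : Ideal R).jacobson, (e * b * e) * (e * a * e) * (e * c * e) = e * j * e

theorem stmt_12 (R : Type*) [Ring R] :
    NJSymmetric R ↔ ∀ e : R, IsIdempotentElem e → CornerNJSymmetric e := by
  constructor
  · intro h e he a b c hn
    refine ⟨(e * b * e) * (e * a * e) * (e * c * e), h _ _ _ hn, ?_⟩
    have he' : e * e = e := he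
    have he2 : ∀ x : R, e * (e * x) = e * x := fun x => by rw [← mul_assoc, he']
    simp only [mul_assoc, he2, he']
  · intro h a b c hn
    obtain ⟨j, hj, hbe⟩ := h 1 (by simp [IsIdempotentElem]) a b c (by simpa using hn)
    simp only [one_mul, mul_one] at hbe
    rwa [hbe]
end

section
/- A trivial Morita context ring R = [[R₁, M], [P, R₂]] (with MP = 0 and PM = 0) is NJ-symmetric if and only if both R₁ and R₂ are NJ-symmetric. -/
/-- The ring of a trivial Morita context `[[R₁, M], [P, R₂]]`, where `M` is an
`(R₁, R₂)`-bimodule, `P` is an `(R₂, R₁)`-bimodule and both context products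
`M × P → R₁` and `P × M → R₂` are zero. -/
@[ext]
structure TrivialMoritaRing (R₁ R₂ M P : Type*) where
  a : R₁
  m : M
  p : P
  b : R₂

namespace TrivialMoritaRing

set_option linter.unusedSectionVars false

variable {R₁ R₂ M P : Type*} [Ring R₁] [Ring R₂]
  [AddCommGroup M] [Module R₁ M] [Module R₂ᵐᵒᵖ M] [SMulCommClass R₁ R₂ᵐᵒᵖ M]
  [AddCommGroup P] [Module R₂ P] [Module R₁ᵐᵒᵖ P] [SMulCommClass R₂ R₁ᵐᵒᵖ P]

instance : Add (TrivialMoritaRing R₁ R₂ M P) :=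
  ⟨fun x y => ⟨x.a + y.a, x.m + y.m, x.p + y.p, x.b + y.b⟩⟩
instance : Zero (TrivialMoritaRing R₁ R₂ M P) := ⟨⟨0, 0, 0, 0⟩⟩
instance : Neg (TrivialMoritaRing R₁ R₂ M P) := ⟨fun x => ⟨-x.a, -x.m, -x.p, -x.b⟩⟩
instance : One (TrivialMoritaRing R₁ R₂ M P) := ⟨⟨1, 0, 0, 1⟩⟩
/-- Multiplication: the usual matrix multiplication with trivial context
products `MP = 0` and `PM = 0`. -/
instance : Mul (TrivialMoritaRing R₁ R₂ M P) :=
  ⟨fun x y => ⟨x.a * y.a, x.a • y.m + MulOpposite.op y.b • x.m,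
    x.b • y.p + MulOpposite.op y.a • x.p, x.b * y.b⟩⟩

@[simp] lemma add_a (x y : TrivialMoritaRing R₁ R₂ M P) : (x + y).a = x.a + y.a := rfl
@[simp] lemma add_m (x y : TrivialMoritaRing R₁ R₂ M P) : (x + y).m = x.m + y.m := rfl
@[simp] lemma add_p (x y : TrivialMoritaRing R₁ R₂ M P) : (x + y).p = x.p + y.p := rfl
@[simp] lemma add_b (x y : TrivialMoritaRing R₁ R₂ M P) : (x + y).b = x.b + y.b := rfl
@[simp] lemma zero_a : (0 : TrivialMoritaRing R₁ R₂ M P).a = 0 := rfl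
@[simp] lemma zero_m : (0 : TrivialMoritaRing R₁ R₂ M P).m = 0 := rfl
@[simp] lemma zero_p : (0 : TrivialMoritaRing R₁ R₂ M P).p = 0 := rfl
@[simp] lemma zero_b : (0 : TrivialMoritaRing R₁ R₂ M P).b = 0 := rfl
@[simp] lemma neg_a (x : TrivialMoritaRing R₁ R₂ M P) : (-x).a = -x.a := rfl
@[simp] lemma neg_m (x : TrivialMoritaRing R₁ R₂ M P) : (-x).m = -x.m := rfl
@[simp] lemma neg_p (x : TrivialMoritaRing R₁ R₂ M P) : (-x).p = -x.p := rfl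
@[simp] lemma neg_b (x : TrivialMoritaRing R₁ R₂ M P) : (-x).b = -x.b := rfl
@[simp] lemma one_a : (1 : TrivialMoritaRing R₁ R₂ M P).a = 1 := rfl
@[simp] lemma one_m : (1 : TrivialMoritaRing R₁ R₂ M P).m = 0 := rfl
@[simp] lemma one_p : (1 : TrivialMoritaRing R₁ R₂ M P).p = 0 := rfl
@[simp] lemma one_b : (1 : TrivialMoritaRing R₁ R₂ M P).b = 1 := rfl
@[simp] lemma mul_a (x y : TrivialMoritaRing R₁ R₂ M P) : (x * y).a = x.a * y.a := rfl
@[simp] lemma mul_m (x y : TrivialMoritaRing R₁ R₂ M P) :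
    (x * y).m = x.a • y.m + MulOpposite.op y.b • x.m := rfl
@[simp] lemma mul_p (x y : TrivialMoritaRing R₁ R₂ M P) :
    (x * y).p = x.b • y.p + MulOpposite.op y.a • x.p := rfl
@[simp] lemma mul_b (x y : TrivialMoritaRing R₁ R₂ M P) : (x * y).b = x.b * y.b := rfl

instance : Ring (TrivialMoritaRing R₁ R₂ M P) where
  add_assoc x y z := by ext <;> simp [add_assoc]
  zero_add x := by ext <;> simp
  add_zero x := by ext <;> simp
  add_comm x y := by ext <;> simp [add_comm]
  neg_add_cancel x := by ext <;> simp
  nsmul := nsmulRec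
  zsmul := zsmulRec
  mul_assoc x y z := by
    ext
    · simp [mul_assoc]
    · simp only [mul_m, mul_a, mul_b, smul_add, mul_smul, MulOpposite.op_mul, add_assoc]
      rw [smul_comm x.a (MulOpposite.op z.b) y.m]
    · simp only [mul_p, mul_a, mul_b, smul_add, mul_smul, MulOpposite.op_mul, add_assoc]
      rw [smul_comm x.b (MulOpposite.op z.a) y.p]
    · simp [mul_assoc]
  one_mul x := by ext <;> simp
  mul_one x := by ext <;> simp
  left_distrib x y z := by
    ext
    · simp [mul_add]
    · simp only [mul_m, add_m, add_a, add_b, MulOpposite.op_add, add_smul, smul_add]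
      abel
    · simp only [mul_p, add_p, add_a, add_b, MulOpposite.op_add, add_smul, smul_add]
      abel
    · simp [mul_add]
  right_distrib x y z := by
    ext
    · simp [add_mul]
    · simp only [mul_m, add_m, add_a, add_b, MulOpposite.op_add, add_smul, smul_add]
      abel
    · simp only [mul_p, add_p, add_a, add_b, MulOpposite.op_add, add_smul, smul_add]
      abel
    · simp [add_mul]
  zero_mul x := by ext <;> simp
  mul_zero x := by ext <;> simp

/-- Projection onto the first diagonal component, as a ring hom. -/
def πa : TrivialMoritaRing R₁ R₂ M P →+* R₁ where
  toFun := a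
  map_one' := rfl
  map_mul' _ _ := rfl
  map_zero' := rfl
  map_add' _ _ := rfl

/-- Projection onto the second diagonal component, as a ring hom. -/
def πb : TrivialMoritaRing R₁ R₂ M P →+* R₂ where
  toFun := b
  map_one' := rfl
  map_mul' _ _ := rfl
  map_zero' := rfl
  map_add' _ _ := rfl

@[simp] lemma sub_a (x y : TrivialMoritaRing R₁ R₂ M P) : (x - y).a = x.a - y.a := by
  rw [sub_eq_add_neg, sub_eq_add_neg]; rfl
@[simp] lemma sub_b (x y : TrivialMoritaRing R₁ R₂ M P) : (x - y).b = x.b - y.b := by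
  rw [sub_eq_add_neg, sub_eq_add_neg]; rfl

lemma exists_left_inv_iff (u : TrivialMoritaRing R₁ R₂ M P) :
    (∃ z, z * u = 1) ↔ (∃ z, z * u.a = 1) ∧ (∃ z, z * u.b = 1) := by
  constructor
  · rintro ⟨z, hz⟩
    exact ⟨⟨z.a, congrArg TrivialMoritaRing.a hz⟩, ⟨z.b, congrArg TrivialMoritaRing.b hz⟩⟩
  · rintro ⟨⟨z₁, h₁⟩, ⟨z₂, h₂⟩⟩
    refine ⟨⟨z₁, -(z₁ • MulOpposite.op z₂ • u.m), -(z₂ • MulOpposite.op z₁ • u.p), z₂⟩, ?_⟩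
    ext
    · simpa using h₁
    · simp only [mul_m, one_m, smul_neg]
      rw [← smul_comm z₁ (MulOpposite.op u.b),
        smul_smul (MulOpposite.op u.b) (MulOpposite.op z₂) u.m, ← MulOpposite.op_mul, h₂,
        MulOpposite.op_one, one_smul]
      abel
    · simp only [mul_p, one_p, smul_neg]
      rw [← smul_comm z₂ (MulOpposite.op u.a),
        smul_smul (MulOpposite.op u.a) (MulOpposite.op z₁) u.p, ← MulOpposite.op_mul, h₁,
        MulOpposite.op_one, one_smul]
      abel
    · simpa using h₂

lemma mem_jacobson_iff (x : TrivialMoritaRing R₁ R₂ M P) :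
    x ∈ (⊥ : Ideal (TrivialMoritaRing R₁ R₂ M P)).jacobson ↔
      x.a ∈ (⊥ : Ideal R₁).jacobson ∧ x.b ∈ (⊥ : Ideal R₂).jacobson := by
  simp only [Ideal.mem_jacobson_iff, Ideal.mem_bot]
  constructor
  · intro h
    constructor
    · intro r
      obtain ⟨z, hz⟩ := h ⟨r, 0, 0, 0⟩
      exact ⟨z.a, by simpa using congrArg TrivialMoritaRing.a hz⟩
    · intro r
      obtain ⟨z, hz⟩ := h ⟨0, 0, 0, r⟩
      exact ⟨z.b, by simpa using congrArg TrivialMoritaRing.b hz⟩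
  · rintro ⟨h1, h2⟩ y
    obtain ⟨z₁, hz₁⟩ := h1 y.a
    obtain ⟨z₂, hz₂⟩ := h2 y.b
    have hz₁' : z₁ * (y * x + 1).a = 1 := by
      have := sub_eq_zero.mp hz₁
      simp only [add_a, mul_a, one_a]
      rw [mul_add, mul_one, ← mul_assoc, this]
    have hz₂' : z₂ * (y * x + 1).b = 1 := by
      have := sub_eq_zero.mp hz₂
      simp only [add_b, mul_b, one_b]
      rw [mul_add, mul_one, ← mul_assoc, this]
    obtain ⟨z, hz⟩ := (exists_left_inv_iff (y * x + 1)).2 ⟨⟨z₁, hz₁'⟩, ⟨z₂, hz₂'⟩⟩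
    refine ⟨z, ?_⟩
    rw [sub_eq_zero]
    rw [mul_add, mul_one, ← mul_assoc] at hz
    exact hz

lemma diag_pow (a : R₁) (b : R₂) (n : ℕ) :
    (⟨a, 0, 0, b⟩ : TrivialMoritaRing R₁ R₂ M P) ^ n = ⟨a ^ n, 0, 0, b ^ n⟩ := by
  induction n with
  | zero =>
    rw [pow_zero, pow_zero, pow_zero]
    rfl
  | succ n ih =>
    rw [pow_succ, pow_succ, pow_succ, ih]
    ext <;> simp

end TrivialMoritaRing

theorem stmt_14 (R₁ R₂ M P : Type*) [Ring R₁] [Ring R₂]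
    [AddCommGroup M] [Module R₁ M] [Module R₂ᵐᵒᵖ M] [SMulCommClass R₁ R₂ᵐᵒᵖ M]
    [AddCommGroup P] [Module R₂ P] [Module R₁ᵐᵒᵖ P] [SMulCommClass R₂ R₁ᵐᵒᵖ P] :
    NJSymmetric (TrivialMoritaRing R₁ R₂ M P) ↔ NJSymmetric R₁ ∧ NJSymmetric R₂ := by
  constructor
  · intro h
    constructor
    · intro a b c habc
      obtain ⟨n, hn⟩ := habc
      have : IsNilpotent ((⟨a, 0, 0, 0⟩ : TrivialMoritaRing R₁ R₂ M P) *
          ⟨b, 0, 0, 0⟩ * ⟨c, 0, 0, 0⟩) := by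
        refine ⟨n + 1, ?_⟩
        have : ((⟨a, 0, 0, 0⟩ : TrivialMoritaRing R₁ R₂ M P) *
            ⟨b, 0, 0, 0⟩ * ⟨c, 0, 0, 0⟩) = ⟨a * b * c, 0, 0, 0⟩ := by
          ext <;> simp
        rw [this, TrivialMoritaRing.diag_pow]
        ext <;> simp [pow_succ, hn]
      have := (TrivialMoritaRing.mem_jacobson_iff _).1 (h _ _ _ this)
      have goal := this.1
      have heq : ((⟨b, 0, 0, 0⟩ : TrivialMoritaRing R₁ R₂ M P) *
          ⟨a, 0, 0, 0⟩ * ⟨c, 0, 0, 0⟩).a = b * a * c := by simp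
      rwa [heq] at goal
    · intro a b c habc
      obtain ⟨n, hn⟩ := habc
      have : IsNilpotent ((⟨0, 0, 0, a⟩ : TrivialMoritaRing R₁ R₂ M P) *
          ⟨0, 0, 0, b⟩ * ⟨0, 0, 0, c⟩) := by
        refine ⟨n + 1, ?_⟩
        have : ((⟨0, 0, 0, a⟩ : TrivialMoritaRing R₁ R₂ M P) *
            ⟨0, 0, 0, b⟩ * ⟨0, 0, 0, c⟩) = ⟨0, 0, 0, a * b * c⟩ := by
          ext <;> simp
        rw [this, TrivialMoritaRing.diag_pow]
        ext <;> simp [pow_succ, hn]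
      have := (TrivialMoritaRing.mem_jacobson_iff _).1 (h _ _ _ this)
      have goal := this.2
      have heq : ((⟨0, 0, 0, b⟩ : TrivialMoritaRing R₁ R₂ M P) *
          ⟨0, 0, 0, a⟩ * ⟨0, 0, 0, c⟩).b = b * a * c := by simp
      rwa [heq] at goal
  · rintro ⟨h1, h2⟩ x y z hxyz
    rw [TrivialMoritaRing.mem_jacobson_iff]
    constructor
    · have : IsNilpotent (x.a * y.a * z.a) := hxyz.map (TrivialMoritaRing.πa)
      simpa using h1 x.a y.a z.a this
    · have : IsNilpotent (x.b * y.b * z.b) := hxyz.map (TrivialMoritaRing.πb)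
      simpa using h2 x.b y.b z.b this
end

section
/- For rings R₁, R₂ and an (R₁,R₂)-bimodule M, the formal triangular matrix ring [[R₁, M], [0, R₂]] is NJ-symmetric if and only if R₁ and R₂ are NJ-symmetric. -/
/-- The formal triangular matrix ring `[[R₁, M], [0, R₂]]` associated to rings
`R₁`, `R₂` and an `(R₁, R₂)`-bimodule `M`. -/
@[ext]
structure TriangularMatrixRing (R₁ R₂ M : Type*) where
  a : R₁
  m : M
  b : R₂

namespace TriangularMatrixRing

set_option linter.unusedSectionVars false

variable {R₁ R₂ M : Type*} [Ring R₁] [Ring R₂] [AddCommGroup M]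
  [Module R₁ M] [Module R₂ᵐᵒᵖ M] [SMulCommClass R₁ R₂ᵐᵒᵖ M]

instance : Add (TriangularMatrixRing R₁ R₂ M) :=
  ⟨fun x y => ⟨x.a + y.a, x.m + y.m, x.b + y.b⟩⟩
instance : Zero (TriangularMatrixRing R₁ R₂ M) := ⟨⟨0, 0, 0⟩⟩
instance : Neg (TriangularMatrixRing R₁ R₂ M) := ⟨fun x => ⟨-x.a, -x.m, -x.b⟩⟩
instance : One (TriangularMatrixRing R₁ R₂ M) := ⟨⟨1, 0, 1⟩⟩
instance : Mul (TriangularMatrixRing R₁ R₂ M) :=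
  ⟨fun x y => ⟨x.a * y.a, x.a • y.m + MulOpposite.op y.b • x.m, x.b * y.b⟩⟩

@[simp] lemma add_a (x y : TriangularMatrixRing R₁ R₂ M) : (x + y).a = x.a + y.a := rfl
@[simp] lemma add_m (x y : TriangularMatrixRing R₁ R₂ M) : (x + y).m = x.m + y.m := rfl
@[simp] lemma add_b (x y : TriangularMatrixRing R₁ R₂ M) : (x + y).b = x.b + y.b := rfl
@[simp] lemma zero_a : (0 : TriangularMatrixRing R₁ R₂ M).a = 0 := rfl
@[simp] lemma zero_m : (0 : TriangularMatrixRing R₁ R₂ M).m = 0 := rfl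
@[simp] lemma zero_b : (0 : TriangularMatrixRing R₁ R₂ M).b = 0 := rfl
@[simp] lemma neg_a (x : TriangularMatrixRing R₁ R₂ M) : (-x).a = -x.a := rfl
@[simp] lemma neg_m (x : TriangularMatrixRing R₁ R₂ M) : (-x).m = -x.m := rfl
@[simp] lemma neg_b (x : TriangularMatrixRing R₁ R₂ M) : (-x).b = -x.b := rfl
@[simp] lemma one_a : (1 : TriangularMatrixRing R₁ R₂ M).a = 1 := rfl
@[simp] lemma one_m : (1 : TriangularMatrixRing R₁ R₂ M).m = 0 := rfl
@[simp] lemma one_b : (1 : TriangularMatrixRing R₁ R₂ M).b = 1 := rfl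
@[simp] lemma mul_a (x y : TriangularMatrixRing R₁ R₂ M) : (x * y).a = x.a * y.a := rfl
@[simp] lemma mul_m (x y : TriangularMatrixRing R₁ R₂ M) :
    (x * y).m = x.a • y.m + MulOpposite.op y.b • x.m := rfl
@[simp] lemma mul_b (x y : TriangularMatrixRing R₁ R₂ M) : (x * y).b = x.b * y.b := rfl

instance : Ring (TriangularMatrixRing R₁ R₂ M) where
  add_assoc x y z := by ext <;> simp [add_assoc]
  zero_add x := by ext <;> simp
  add_zero x := by ext <;> simp
  add_comm x y := by ext <;> simp [add_comm]
  neg_add_cancel x := by ext <;> simp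
  nsmul := nsmulRec
  zsmul := zsmulRec
  mul_assoc x y z := by
    ext
    · simp [mul_assoc]
    · simp only [mul_m, mul_a, mul_b, smul_add, mul_smul, MulOpposite.op_mul, add_assoc]
      rw [smul_comm x.a (MulOpposite.op z.b) y.m]
    · simp [mul_assoc]
  one_mul x := by ext <;> simp
  mul_one x := by ext <;> simp
  left_distrib x y z := by
    ext
    · simp [mul_add]
    · simp only [mul_m, add_m, add_a, add_b, MulOpposite.op_add, add_smul, smul_add]
      abel
    · simp [mul_add]
  right_distrib x y z := by
    ext
    · simp [add_mul]
    · simp only [mul_m, add_m, add_a, add_b, MulOpposite.op_add, add_smul, smul_add]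
      abel
    · simp [add_mul]
  zero_mul x := by ext <;> simp
  mul_zero x := by ext <;> simp

end TriangularMatrixRing

/-- Characterization of the Jacobson radical of a (possibly noncommutative) ring:
`x` lies in it iff `y * x + 1` is a unit for every `y`. -/
lemma mem_jacobson_bot_iff_nc {R : Type*} [Ring R] {x : R} :
    x ∈ (⊥ : Ideal R).jacobson ↔ ∀ y, IsUnit (y * x + 1) := by
  rw [Ideal.mem_jacobson_iff]
  constructor
  · intro H y
    obtain ⟨z, hz⟩ := H y
    rw [Ideal.mem_bot, sub_eq_zero] at hz
    have hz1 : z * (y * x + 1) = 1 := by rw [mul_add, mul_one, ← mul_assoc, hz]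
    obtain ⟨w, hw⟩ := H (-(z * y))
    rw [Ideal.mem_bot, sub_eq_zero] at hw
    have hzeq : z = -(z * y) * x + 1 := by
      have hsub : z = 1 - z * y * x := by rw [eq_sub_iff_add_eq, add_comm]; exact hz
      rw [neg_mul, ← sub_eq_neg_add]
      exact hsub
    have hw1 : w * z = 1 := by
      rw [hzeq, mul_add, mul_one, ← mul_assoc, hw]
    have hwu : w = y * x + 1 := by
      calc w = w * (z * (y * x + 1)) := by rw [hz1, mul_one]
        _ = (w * z) * (y * x + 1) := by rw [mul_assoc]
        _ = y * x + 1 := by rw [hw1, one_mul]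
    exact ⟨⟨y * x + 1, z, by rw [← hwu]; exact hw1, hz1⟩, rfl⟩
  · intro H y
    obtain ⟨u, hu⟩ := H y
    refine ⟨↑u⁻¹, ?_⟩
    rw [Ideal.mem_bot, sub_eq_zero]
    have h1 : (↑u⁻¹ : R) * (y * x + 1) = 1 := by rw [← hu]; exact u.inv_mul
    rw [mul_add, mul_one, ← mul_assoc] at h1
    exact h1

namespace TriangularMatrixRing

variable {R₁ R₂ M : Type*} [Ring R₁] [Ring R₂] [AddCommGroup M]
  [Module R₁ M] [Module R₂ᵐᵒᵖ M] [SMulCommClass R₁ R₂ᵐᵒᵖ M]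

/-- Projection onto the upper-left component, as a ring hom. -/
def πa : TriangularMatrixRing R₁ R₂ M →+* R₁ where
  toFun x := x.a
  map_one' := rfl
  map_mul' _ _ := rfl
  map_zero' := rfl
  map_add' _ _ := rfl

/-- Projection onto the lower-right component, as a ring hom. -/
def πb : TriangularMatrixRing R₁ R₂ M →+* R₂ where
  toFun x := x.b
  map_one' := rfl
  map_mul' _ _ := rfl
  map_zero' := rfl
  map_add' _ _ := rfl

lemma isUnit_of (x : TriangularMatrixRing R₁ R₂ M) (ha : IsUnit x.a) (hb : IsUnit x.b) :
    IsUnit x := by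
  obtain ⟨u, hu⟩ := ha
  obtain ⟨v, hv⟩ := hb
  set i : TriangularMatrixRing R₁ R₂ M :=
    ⟨(↑u⁻¹ : R₁), -((↑u⁻¹ : R₁) • (MulOpposite.op (↑v⁻¹ : R₂) • x.m)), (↑v⁻¹ : R₂)⟩ with hi
  have h1 : x * i = 1 := by
    ext
    · simp [hi, ← hu, u.mul_inv]
    · simp only [hi, mul_m, smul_neg, one_m, smul_smul]
      rw [← hu, u.mul_inv, one_smul]
      abel
    · simp [hi, ← hv, v.mul_inv]
  have h2 : i * x = 1 := by
    ext
    · simp [hi, ← hu, u.inv_mul]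
    · simp only [hi, mul_m, smul_neg, one_m]
      rw [← smul_comm ((↑u⁻¹ : R₁)) (MulOpposite.op x.b) ((MulOpposite.op (↑v⁻¹ : R₂)) • x.m),
        smul_smul (MulOpposite.op x.b), ← MulOpposite.op_mul, ← hv, v.inv_mul,
        MulOpposite.op_one, one_smul]
      abel
    · simp [hi, ← hv, v.inv_mul]
  exact ⟨⟨x, i, h1, h2⟩, rfl⟩

lemma pow_aa (x : R₁) (n : ℕ) :
    ((⟨x, 0, 0⟩ : TriangularMatrixRing R₁ R₂ M) ^ (n + 1)) = ⟨x ^ (n + 1), 0, 0⟩ := by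
  induction n with
  | zero => ext <;> simp [pow_succ]
  | succ n ih => rw [pow_succ, ih]; ext <;> simp [pow_succ]

lemma pow_bb (x : R₂) (n : ℕ) :
    ((⟨0, 0, x⟩ : TriangularMatrixRing R₁ R₂ M) ^ (n + 1)) = ⟨0, 0, x ^ (n + 1)⟩ := by
  induction n with
  | zero => ext <;> simp [pow_succ]
  | succ n ih => rw [pow_succ, ih]; ext <;> simp [pow_succ]

end TriangularMatrixRing

theorem stmt_15 (R₁ R₂ M : Type*) [Ring R₁] [Ring R₂] [AddCommGroup M]
    [Module R₁ M] [Module R₂ᵐᵒᵖ M] [SMulCommClass R₁ R₂ᵐᵒᵖ M] :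
    NJSymmetric (TriangularMatrixRing R₁ R₂ M) ↔ NJSymmetric R₁ ∧ NJSymmetric R₂ := by
  open TriangularMatrixRing in
  constructor
  · intro h
    constructor
    · intro a b c ⟨n, hn⟩
      have key : (⟨b, 0, 0⟩ : TriangularMatrixRing R₁ R₂ M) * ⟨a, 0, 0⟩ * ⟨c, 0, 0⟩
          ∈ (⊥ : Ideal (TriangularMatrixRing R₁ R₂ M)).jacobson := by
        apply h
        have e : (⟨a, 0, 0⟩ : TriangularMatrixRing R₁ R₂ M) * ⟨b, 0, 0⟩ * ⟨c, 0, 0⟩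
            = ⟨a * b * c, 0, 0⟩ := by ext <;> simp
        refine ⟨n + 1, ?_⟩
        rw [e, pow_aa, pow_succ, hn, zero_mul]
        ext <;> simp
      rw [mem_jacobson_bot_iff_nc] at key ⊢
      intro y
      have := (key ⟨y, 0, 0⟩).map (πa (R₂ := R₂) (M := M))
      have e : (πa (R₂ := R₂) (M := M))
          ((⟨y, 0, 0⟩ : TriangularMatrixRing R₁ R₂ M) * (⟨b, 0, 0⟩ * ⟨a, 0, 0⟩ * ⟨c, 0, 0⟩) + 1)
          = y * (b * a * c) + 1 := rfl
      rwa [e] at this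
    · intro a b c ⟨n, hn⟩
      have key : (⟨0, 0, b⟩ : TriangularMatrixRing R₁ R₂ M) * ⟨0, 0, a⟩ * ⟨0, 0, c⟩
          ∈ (⊥ : Ideal (TriangularMatrixRing R₁ R₂ M)).jacobson := by
        apply h
        have e : (⟨0, 0, a⟩ : TriangularMatrixRing R₁ R₂ M) * ⟨0, 0, b⟩ * ⟨0, 0, c⟩
            = ⟨0, 0, a * b * c⟩ := by ext <;> simp
        refine ⟨n + 1, ?_⟩
        rw [e, pow_bb, pow_succ, hn, zero_mul]
        ext <;> simp
      rw [mem_jacobson_bot_iff_nc] at key ⊢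
      intro y
      have := (key ⟨0, 0, y⟩).map (πb (R₁ := R₁) (M := M))
      have e : (πb (R₁ := R₁) (M := M))
          ((⟨0, 0, y⟩ : TriangularMatrixRing R₁ R₂ M) * (⟨0, 0, b⟩ * ⟨0, 0, a⟩ * ⟨0, 0, c⟩) + 1)
          = y * (b * a * c) + 1 := rfl
      rwa [e] at this
  · rintro ⟨h1, h2⟩ x y z hn
    have ha : y.a * x.a * z.a ∈ (⊥ : Ideal R₁).jacobson := by
      apply h1
      exact hn.map (πa : TriangularMatrixRing R₁ R₂ M →+* R₁)
    have hb : y.b * x.b * z.b ∈ (⊥ : Ideal R₂).jacobson := by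
      apply h2
      exact hn.map (πb : TriangularMatrixRing R₁ R₂ M →+* R₂)
    rw [mem_jacobson_bot_iff_nc] at ha hb ⊢
    intro w
    apply isUnit_of
    · have e : (w * (y * x * z) + 1).a = w.a * (y.a * x.a * z.a) + 1 := rfl
      rw [e]; exact ha w.a
    · have e : (w * (y * x * z) + 1).b = w.b * (y.b * x.b * z.b) + 1 := rfl
      rw [e]; exact hb w.b
end

section
/- For any ring R and integer n ≥ 1, R is NJ-symmetric if and only if the upper triangular matrix ring T_n(R) is NJ-symmetric. -/
/-- The ring `T_n(R)` of `n × n` upper triangular matrices over `R`,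
as a subring of the full matrix ring. -/
def upperTriangular (R : Type*) [Ring R] (n : ℕ) :
    Subring (Matrix (Fin n) (Fin n) R) where
  carrier := {A | ∀ i j : Fin n, j < i → A i j = 0}
  mul_mem' := by
    intro A B hA hB i j hji
    rw [Matrix.mul_apply]
    refine Finset.sum_eq_zero fun k _ => ?_
    rcases lt_or_ge k i with h | h
    · rw [hA i k h, zero_mul]
    · rw [hB k j (lt_of_lt_of_le hji h), mul_zero]
  one_mem' := fun i j hji => Matrix.one_apply_ne hji.ne'
  add_mem' := by
    intro A B hA hB i j hji
    simp [Matrix.add_apply, hA i j hji, hB i j hji]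
  zero_mem' := fun i j _ => rfl
  neg_mem' := by
    intro A hA i j hji
    simp [Matrix.neg_apply, hA i j hji]

section Helpers

variable {R : Type*} [Ring R]

/-- If `x` is in the Jacobson radical, then `x + 1` has a left inverse. -/
lemma leftInv_of_mem_jacobson_bot {x : R} (hx : x ∈ (⊥ : Ideal R).jacobson) :
    ∃ z, z * (x + 1) = 1 := by
  obtain ⟨z, hz⟩ := Ideal.mem_jacobson_iff.mp hx 1
  rw [Ideal.mem_bot, sub_eq_zero, mul_one] at hz
  exact ⟨z, by rw [mul_add, mul_one, hz]⟩

/-- If `x` is in the Jacobson radical, then `x + 1` is a unit. -/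
lemma isUnit_add_one_of_mem_jacobson_bot {x : R} (hx : x ∈ (⊥ : Ideal R).jacobson) :
    IsUnit (x + 1) := by
  obtain ⟨z, hz⟩ := leftInv_of_mem_jacobson_bot hx
  have hz' : z = -(z * x) + 1 := by
    have : z * x + z = 1 := by rw [mul_add, mul_one] at hz; exact hz
    rw [neg_add_eq_sub, eq_sub_iff_add_eq', this]
  have hmem : -(z * x) ∈ (⊥ : Ideal R).jacobson :=
    neg_mem (Ideal.mul_mem_left _ z hx)
  obtain ⟨w, hw⟩ := leftInv_of_mem_jacobson_bot hmem
  rw [← hz'] at hw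
  -- w * z = 1 and z * (x + 1) = 1, so z is a unit and x + 1 its inverse
  have hwz : w = x + 1 := by
    calc w = w * (z * (x + 1)) := by rw [hz, mul_one]
    _ = (w * z) * (x + 1) := by rw [mul_assoc]
    _ = x + 1 := by rw [hw, one_mul]
  refine ⟨⟨x + 1, z, ?_, hz⟩, rfl⟩
  rw [← hwz]; exact hw

lemma isUnit_mul_add_one_of_mem_jacobson_bot {x : R} (hx : x ∈ (⊥ : Ideal R).jacobson)
    (y : R) : IsUnit (y * x + 1) :=
  isUnit_add_one_of_mem_jacobson_bot (Ideal.mul_mem_left _ y hx)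

lemma mem_jacobson_bot_of_forall_isUnit {x : R} (h : ∀ y, IsUnit (y * x + 1)) :
    x ∈ (⊥ : Ideal R).jacobson := by
  rw [Ideal.mem_jacobson_iff]
  intro y
  obtain ⟨u, hu⟩ := h y
  refine ⟨↑u⁻¹, ?_⟩
  rw [Ideal.mem_bot, sub_eq_zero, mul_assoc]
  calc (↑u⁻¹ : R) * (y * x) + ↑u⁻¹ = ↑u⁻¹ * (y * x + 1) := by rw [mul_add, mul_one]
  _ = 1 := by rw [← hu, Units.inv_mul]

variable {n : ℕ}

/-- Extracting the `i`-th diagonal entry is a ring hom on upper triangular matrices. -/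
def diagEntry (i : Fin n) : (upperTriangular R n) →+* R where
  toFun A := A.1 i i
  map_one' := Matrix.one_apply_eq i
  map_mul' A B := by
    show (A.1 * B.1) i i = A.1 i i * B.1 i i
    rw [Matrix.mul_apply]
    refine Finset.sum_eq_single i (fun k _ hk => ?_) (fun h => absurd (Finset.mem_univ i) h)
    rcases Ne.lt_or_gt hk with h | h
    · rw [A.2 i k h, zero_mul]
    · rw [B.2 k i h, mul_zero]
  map_zero' := rfl
  map_add' _ _ := rfl

/-- The diagonal embedding of `R` into upper triangular matrices. -/
def diagEmb : R →+* (upperTriangular R n) where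
  toFun a := ⟨Matrix.diagonal (fun _ => a), fun _ _ h => Matrix.diagonal_apply_ne _ h.ne'⟩
  map_one' := Subtype.ext Matrix.diagonal_one
  map_mul' a b := Subtype.ext (Matrix.diagonal_mul_diagonal _ _).symm
  map_zero' := Subtype.ext (Matrix.diagonal_zero)
  map_add' a b := Subtype.ext (Matrix.diagonal_add _ _).symm

lemma diagEntry_diagEmb (i : Fin n) (a : R) : diagEntry i (diagEmb a) = a :=
  show Matrix.diagonal (fun _ => a) i i = a from Matrix.diagonal_apply_eq _ i

/-- Strictly upper triangular matrices are nilpotent. -/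
lemma strict_pow_eq_zero {N : Matrix (Fin n) (Fin n) R}
    (hN : ∀ i j : Fin n, (j : ℕ) ≤ i → N i j = 0) : N ^ n = 0 := by
  have key : ∀ k (i j : Fin n), (j : ℕ) < i + k → (N ^ k) i j = 0 := by
    intro k
    induction k with
    | zero =>
      intro i j h
      have hij : i ≠ j := by intro e; subst e; omega
      rw [pow_zero]
      exact Matrix.one_apply_ne hij
    | succ k ih =>
      intro i j h
      rw [pow_succ', Matrix.mul_apply]
      refine Finset.sum_eq_zero fun l _ => ?_
      rcases le_or_gt (l : ℕ) i with hl | hl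
      · rw [hN i l hl, zero_mul]
      · rw [ih l j (by omega), mul_zero]
  ext i j
  have := key n i j (by omega)
  simpa using this

/-- An upper triangular matrix whose diagonal entries are units is a unit in `T_n(R)`. -/
lemma isUnit_of_isUnit_diag {U : upperTriangular R n}
    (h : ∀ i, IsUnit (U.1 i i)) : IsUnit U := by
  choose u hu using h
  set D : Matrix (Fin n) (Fin n) R := Matrix.diagonal (fun i => (u i : R)) with hD
  set D' : Matrix (Fin n) (Fin n) R := Matrix.diagonal (fun i => ((u i)⁻¹ : Rˣ)) with hD'
  have hDmem : D ∈ upperTriangular R n := fun _ _ hij => Matrix.diagonal_apply_ne _ hij.ne'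
  have hD'mem : D' ∈ upperTriangular R n := fun _ _ hij => Matrix.diagonal_apply_ne _ hij.ne'
  have hDD' : D * D' = 1 := by
    rw [hD, hD', Matrix.diagonal_mul_diagonal]
    convert Matrix.diagonal_one using 2
    simp [Units.mul_inv]
  have hD'D : D' * D = 1 := by
    rw [hD, hD', Matrix.diagonal_mul_diagonal]
    convert Matrix.diagonal_one using 2
    simp [Units.inv_mul]
  set N : Matrix (Fin n) (Fin n) R := U.1 - D with hNdef
  have hNmem : N ∈ upperTriangular R n :=
    Subring.sub_mem _ U.2 hDmem
  have hNstrict : ∀ i j : Fin n, (j : ℕ) ≤ i → N i j = 0 := by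
    intro i j hij
    rcases eq_or_lt_of_le hij with he | hlt
    · have : i = j := Fin.ext he.symm
      subst this
      simp [hNdef, hD, Matrix.sub_apply, hu i]
    · have hji : j < i := hlt
      simp [hNdef, hD, Matrix.sub_apply, U.2 i j hji, Matrix.diagonal_apply_ne _ hji.ne']
  have hMstrict : ∀ i j : Fin n, (j : ℕ) ≤ i → (D' * N) i j = 0 := by
    intro i j hij
    rw [hD', Matrix.diagonal_mul, hNstrict i j hij, mul_zero]
  have hMpow : (D' * N) ^ n = 0 := strict_pow_eq_zero hMstrict
  -- now work inside the subring
  set d : upperTriangular R n := ⟨D, hDmem⟩ with hd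
  set d' : upperTriangular R n := ⟨D', hD'mem⟩ with hd'
  set m : upperTriangular R n := ⟨D' * N, Subring.mul_mem _ hD'mem hNmem⟩ with hm
  have hmnil : IsNilpotent m := by
    refine ⟨n, ?_⟩
    apply Subtype.ext
    rw [SubmonoidClass.coe_pow]
    exact hMpow
  have hdunit : IsUnit d :=
    ⟨⟨d, d', Subtype.ext hDD', Subtype.ext hD'D⟩, rfl⟩
  have honeunit : IsUnit (1 + m) := hmnil.isUnit_one_add
  have hfact : U = d * (1 + m) := by
    apply Subtype.ext
    show U.1 = D * (1 + D' * N)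
    rw [mul_add, mul_one, ← mul_assoc, hDD', one_mul, hNdef, add_sub_cancel]
  rw [hfact]
  exact hdunit.mul honeunit

/-- An upper triangular matrix whose diagonal entries lie in `J(R)` lies in `J(T_n(R))`. -/
lemma mem_jacobson_of_diag {X : upperTriangular R n}
    (h : ∀ i, X.1 i i ∈ (⊥ : Ideal R).jacobson) :
    X ∈ (⊥ : Ideal (upperTriangular R n)).jacobson := by
  apply mem_jacobson_bot_of_forall_isUnit
  intro Y
  apply isUnit_of_isUnit_diag
  intro i
  have : (Y * X + 1).1 i i = Y.1 i i * X.1 i i + 1 := by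
    have h := map_add (diagEntry (R := R) (n := n) i) (Y * X) 1
    rw [map_mul, map_one] at h
    exact h
  rw [this]
  exact isUnit_mul_add_one_of_mem_jacobson_bot (h i) _

end Helpers

theorem stmt_16 (R : Type*) [Ring R] (n : ℕ) (hn : 1 ≤ n) :
    NJSymmetric R ↔ NJSymmetric (upperTriangular R n) := by
  constructor
  · intro hR A B C habc
    apply mem_jacobson_of_diag
    intro i
    have h1 : IsNilpotent ((diagEntry i) (A * B * C)) := habc.map (diagEntry i)
    rw [map_mul, map_mul] at h1
    have h2 := hR _ _ _ h1
    have h3 : (B * A * C).1 i i =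
        (diagEntry i) B * (diagEntry i) A * (diagEntry i) C := by
      rw [← map_mul, ← map_mul]; rfl
    rw [h3]
    exact h2
  · intro hS a b c habc
    set i0 : Fin n := ⟨0, hn⟩ with hi0
    apply mem_jacobson_bot_of_forall_isUnit
    intro y
    have h1 : IsNilpotent ((diagEmb a : upperTriangular R n) * diagEmb b * diagEmb c) := by
      rw [← map_mul, ← map_mul]
      exact habc.map diagEmb
    have h2 := hS _ _ _ h1
    have h3 : IsUnit ((diagEmb y : upperTriangular R n) *
        (diagEmb b * diagEmb a * diagEmb c) + 1) :=
      isUnit_mul_add_one_of_mem_jacobson_bot h2 _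
    have h4 := h3.map (diagEntry i0)
    rw [map_add, map_mul, map_mul, map_mul, map_one] at h4
    simp only [diagEntry_diagEmb] at h4
    exact h4
end

section
/- Let I be a nil two-sided ideal of a ring R. If R/I is NJ-symmetric, then R is NJ-symmetric. -/
theorem stmt_17 (R : Type*) [Ring R] (I : TwoSidedIdeal R)
    (hnil : ∀ x ∈ I, IsNilpotent x)
    (S : Type*) [Ring S] (f : R →+* S) (hf : Function.Surjective f)
    (hker : ∀ x : R, f x = 0 ↔ x ∈ I)
    (hS : NJSymmetric S) :
    NJSymmetric R := by
  intro a b c habc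
  have hSmem : f b * f a * f c ∈ (⊥ : Ideal S).jacobson := by
    apply hS
    rw [← map_mul, ← map_mul]
    exact habc.map f
  rw [Ideal.mem_jacobson_iff]
  intro y
  obtain ⟨z', hz'⟩ := Ideal.mem_jacobson_iff.1 hSmem (f y)
  rw [Ideal.mem_bot] at hz'
  obtain ⟨z, rfl⟩ := hf z'
  set x := b * a * c with hx
  have hfx : f (z * y * x + z - 1) = 0 := by
    simp only [hx, map_sub, map_add, map_mul, map_one]
    rw [← hz']
  have hw : IsNilpotent (z * y * x + z - 1) := hnil _ ((hker _).1 hfx)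
  obtain ⟨u, hu⟩ := hw.isUnit_add_one
  -- u : units with ↑u = (z*y*x + z - 1) + 1 = z*y*x + z
  refine ⟨(↑u⁻¹ : R) * z, ?_⟩
  rw [Ideal.mem_bot]
  have : (↑u⁻¹ : R) * z * y * x + (↑u⁻¹ : R) * z = (↑u⁻¹ : R) * (z * y * x + z) := by noncomm_ring
  rw [this]
  have h2 : (z * y * x + z) = (u : R) := by rw [hu, sub_add_cancel]
  rw [h2, Units.inv_mul, sub_self]
end

section
/- A ring R is NJ-symmetric if and only if the ring R_n of n×n upper triangular matrices over R with constant diagonal (all diagonal entries equal) is NJ-symmetric. -/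
/-- The ring `R_n` of `n × n` upper triangular matrices over `R` whose diagonal
entries are all equal, as a subring of the full matrix ring. -/
def constDiagUpperTriangular (R : Type*) [Ring R] (n : ℕ) :
    Subring (Matrix (Fin n) (Fin n) R) where
  carrier := {A | (∀ i j : Fin n, j < i → A i j = 0) ∧ ∀ i j : Fin n, A i i = A j j}
  mul_mem' := by
    rintro A B ⟨hA1, hA2⟩ ⟨hB1, hB2⟩
    constructor
    · intro i j hji
      rw [Matrix.mul_apply]
      refine Finset.sum_eq_zero fun k _ => ?_
      rcases lt_or_ge k i with h | h
      · rw [hA1 i k h, zero_mul]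
      · rw [hB1 k j (lt_of_lt_of_le hji h), mul_zero]
    · have key : ∀ k : Fin n, (A * B) k k = A k k * B k k := by
        intro k
        rw [Matrix.mul_apply]
        refine Finset.sum_eq_single k (fun l _ hl => ?_) fun h => absurd (Finset.mem_univ k) h
        rcases lt_or_ge l k with hlk | hlk
        · rw [hA1 k l hlk, zero_mul]
        · rw [hB1 l k (lt_of_le_of_ne hlk (Ne.symm hl)), mul_zero]
      intro i j
      rw [key i, key j, hA2 i j, hB2 i j]
  one_mem' :=
    ⟨fun i j hji => Matrix.one_apply_ne hji.ne', fun i j => by simp [Matrix.one_apply]⟩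
  add_mem' := by
    rintro A B ⟨hA1, hA2⟩ ⟨hB1, hB2⟩
    exact ⟨fun i j hji => by simp [Matrix.add_apply, hA1 i j hji, hB1 i j hji],
      fun i j => by simp [Matrix.add_apply, hA2 i j, hB2 i j]⟩
  zero_mem' := ⟨fun i j _ => rfl, fun i j => rfl⟩
  neg_mem' := by
    rintro A ⟨hA1, hA2⟩
    exact ⟨fun i j hji => by simp [Matrix.neg_apply, hA1 i j hji],
      fun i j => by simp [Matrix.neg_apply, hA2 i j]⟩

section Homs

variable (R : Type*) [Ring R] (n : ℕ)

/-- diagonal entry map -/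
def cduDiag (hn : 1 ≤ n) : constDiagUpperTriangular R n →+* R where
  toFun A := A.1 ⟨0, hn⟩ ⟨0, hn⟩
  map_one' := by simp
  map_zero' := rfl
  map_add' A B := by simp
  map_mul' A B := by
    show ((A : Matrix (Fin n) (Fin n) R) * B) ⟨0, hn⟩ ⟨0, hn⟩ = _
    rw [Matrix.mul_apply]
    refine Finset.sum_eq_single _ (fun l _ hl => ?_) fun h => absurd (Finset.mem_univ _) h
    have hlt : (⟨0, hn⟩ : Fin n) < l := by
      rcases Fin.lt_or_lt_of_ne hl with h | h
      · exact absurd h (by simp [Fin.lt_def])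
      · exact h
    rw [B.2.1 l ⟨0, hn⟩ hlt, mul_zero]

/-- scalar embedding -/
def cduScalar : R →+* constDiagUpperTriangular R n where
  toFun r := ⟨Matrix.diagonal fun _ => r,
    fun i j hji => Matrix.diagonal_apply_ne _ hji.ne',
    fun i j => by simp⟩
  map_one' := by ext i j; simp [Matrix.one_apply, Matrix.diagonal_apply]
  map_zero' := by ext i j; simp
  map_add' a b := by ext i j; simp [Matrix.diagonal_apply]; split <;> simp
  map_mul' a b := by
    apply Subtype.ext
    show Matrix.diagonal _ = Matrix.diagonal (fun _ : Fin n => a) * Matrix.diagonal fun _ => b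
    rw [Matrix.diagonal_mul_diagonal]

lemma cduDiag_scalar (hn : 1 ≤ n) (r : R) : cduDiag R n hn (cduScalar R n r) = r := by
  show (Matrix.diagonal fun _ : Fin n => r) (⟨0, hn⟩ : Fin n) (⟨0, hn⟩ : Fin n) = r
  simp [cduDiag, cduScalar]

end Homs


section Aux

variable {R : Type*} [Ring R] {n : ℕ}

lemma strictUpper_pow_apply (A : Matrix (Fin n) (Fin n) R)
    (h : ∀ i j : Fin n, (j : ℕ) ≤ (i : ℕ) → A i j = 0) :
    ∀ k (i j : Fin n), (j : ℕ) < (i : ℕ) + k → (A ^ k) i j = 0 := by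
  intro k
  induction k with
  | zero =>
    intro i j hij
    rw [pow_zero]
    exact Matrix.one_apply_ne (fun e => by simp [e] at hij)
  | succ k ih =>
    intro i j hij
    rw [pow_succ, Matrix.mul_apply]
    refine Finset.sum_eq_zero fun l _ => ?_
    rcases lt_or_ge (l : ℕ) ((i : ℕ) + k) with hl | hl
    · rw [ih i l hl, zero_mul]
    · have : (j : ℕ) ≤ (l : ℕ) := by omega
      rw [h l j this, mul_zero]

lemma strictUpper_pow_eq_zero (A : Matrix (Fin n) (Fin n) R)
    (h : ∀ i j : Fin n, (j : ℕ) ≤ (i : ℕ) → A i j = 0) : A ^ n = 0 := by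
  ext i j
  rw [strictUpper_pow_apply A h n i j (by omega), Matrix.zero_apply]

end Aux

set_option maxHeartbeats 1000000 in
theorem stmt_18 (R : Type*) [Ring R] (n : ℕ) (hn : 1 ≤ n) :
    NJSymmetric R ↔ NJSymmetric (constDiagUpperTriangular R n) := by
  let φ := cduDiag R n hn
  let σ := cduScalar R n
  constructor
  · intro h A B C hABC
    rw [Ideal.mem_jacobson_iff]
    intro Y
    have h1 : IsNilpotent (φ A * φ B * φ C) := by
      simpa only [map_mul] using hABC.map φ
    have h2 := h _ _ _ h1
    rw [Ideal.mem_jacobson_iff] at h2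
    obtain ⟨z, hz⟩ := h2 (φ Y)
    rw [Ideal.mem_bot] at hz
    have hφW : φ (σ z * Y * (B * A * C) + σ z - 1) = 0 := by
      simp only [map_sub, map_add, map_mul, map_one, φ, σ, cduDiag_scalar]
      exact hz
    have hWnil : IsNilpotent (σ z * Y * (B * A * C) + σ z - 1) := by
      refine ⟨n, Subtype.ext ?_⟩
      rw [SubmonoidClass.coe_pow]
      refine strictUpper_pow_eq_zero _ fun i j hij => ?_
      rcases lt_or_eq_of_le hij with hlt | heq
      · exact (σ z * Y * (B * A * C) + σ z - 1).2.1 i j (Fin.lt_def.mpr hlt)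
      · have hji : j = i := Fin.ext heq
        subst hji
        calc ((σ z * Y * (B * A * C) + σ z - 1 :
                constDiagUpperTriangular R n) : Matrix (Fin n) (Fin n) R) j j
            = ((σ z * Y * (B * A * C) + σ z - 1 :
                constDiagUpperTriangular R n) : Matrix (Fin n) (Fin n) R) ⟨0, hn⟩ ⟨0, hn⟩ :=
              (σ z * Y * (B * A * C) + σ z - 1).2.2 j ⟨0, hn⟩
          _ = 0 := hφW
    obtain ⟨v, hv⟩ := (IsNilpotent.isUnit_one_add hWnil).exists_left_inv
    refine ⟨v * σ z, ?_⟩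
    rw [Ideal.mem_bot, sub_eq_zero]
    have e1 : 1 + (σ z * Y * (B * A * C) + σ z - 1) = σ z * Y * (B * A * C) + σ z := by
      abel
    rw [mul_assoc v (σ z) Y, mul_assoc v (σ z * Y) (B * A * C), ← mul_add, ← e1]
    exact hv
  · intro h a b c habc
    rw [Ideal.mem_jacobson_iff]
    intro y
    have h1 : IsNilpotent (σ a * σ b * σ c) := by
      simpa only [map_mul] using habc.map σ
    have h2 := h _ _ _ h1
    rw [Ideal.mem_jacobson_iff] at h2
    obtain ⟨Z, hZ⟩ := h2 (σ y)
    rw [Ideal.mem_bot] at hZ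
    refine ⟨φ Z, ?_⟩
    rw [Ideal.mem_bot]
    have := congrArg φ hZ
    simpa only [map_sub, map_add, map_mul, map_one, map_zero, φ, σ, cduDiag_scalar] using this
end
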